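/- Let A be a unital C*-algebra and let L ∈ A be an isometry, i.e. L*L = 1. With P := 1 − L²(L*)² and W := P(L + L*)P, the element W is a self-adjoint partial isometry with W* = W and W² = P. -/
import Mathlib


/-- If `L` is an isometry in a unital C⋆-algebra, `P = 1 - L² (L*)²` and `W = P (L + L*) P`,
then `W` is a self-adjoint partial isometry with `W* = W` and `W² = P`. -/
theorem W_selfadjoint_partial_isometry {A : Type*} [CStarAlgebra A]
    (L : A) (hL : star L * L = 1)
    (P W : A) (hP : P = 1 - L ^ 2 * (star L) ^ 2) (hW : W = P * (L + star L) * P) :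
    star W = W ∧ W * W = P ∧ W * star W * W = W := by
  have hL' : ∀ x : A, star L * (L * x) = x := fun x => by
    rw [← mul_assoc, hL, one_mul]
  have hsP : star P = P := by
    simp [hP, pow_two, star_sub, star_mul, mul_assoc]
  have hsW : star W = W := by
    rw [hW]
    simp only [star_mul, star_add, star_star, hsP]
    rw [mul_assoc, add_comm]
  have hWW : W * W = P := by
    rw [hW, hP]
    simp only [sub_mul, mul_sub, add_mul, mul_add, one_mul, mul_one, pow_two, mul_assoc, hL, hL']
    abel_nf
  have hPP : P * P = P := by
    rw [hP]
    simp only [sub_mul, mul_sub, one_mul, mul_one, pow_two, mul_assoc, hL, hL']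
    abel_nf
  refine ⟨hsW, hWW, ?_⟩
  rw [hsW, mul_assoc, hWW, hW, mul_assoc, mul_assoc, hPP, ← mul_assoc]
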